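/- Let λ ≥ μ be infinite regular cardinals, κ a cardinal, and (f_β)_{β<κ} a family of functions from λ to μ. If for every ultrafilter D uniform over λ there exists β < κ with f_β(D) uniform over μ, then for every function g : κ → μ there exists a finite set F ⊆ κ such that |⋂_{β∈F} f_β⁻¹([0, g(β)))| < λ. -/

import Mathlib

open Cardinal Set

/-- An ultrafilter over a cardinal `l` (realized as `l.ord.ToType`) is *uniform*
if every member has cardinality `l`. -/
def IsUniformUltrafilter (l : Cardinal) (D : Ultrafilter l.ord.ToType) : Prop :=
  ∀ s ∈ D, #s = l

/-- If every ultrafilter uniform over `λ` has some pushforward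
`f_β(D)` uniform over `μ`, then for every `g : κ → μ` some finite
intersection `⋂_{β ∈ F} f_β⁻¹ [0, g β)` has cardinality `< λ`. -/
theorem stmt1 (l m : Cardinal) (hl : l.IsRegular) (hm : m.IsRegular) (hml : m ≤ l)
    {ι : Type*} (f : ι → l.ord.ToType → m.ord.ToType)
    (h : ∀ D : Ultrafilter l.ord.ToType, IsUniformUltrafilter l D →
      ∃ β : ι, ∀ t ∈ Ultrafilter.map (f β) D, #t = m) :
    ∀ g : ι → m.ord.ToType, ∃ F : Finset ι,
      #(↥(⋂ β ∈ F, f β ⁻¹' Set.Iio (g β))) < l := by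
  intro g
  by_contra hcon
  push_neg at hcon
  set A : ι → Set l.ord.ToType := fun β => f β ⁻¹' Set.Iio (g β) with hA
  set S : Set (Set l.ord.ToType) := Set.range A ∪ {s | #(↥sᶜ) < l} with hS
  -- the filter generated by S is proper
  have hgen : (Filter.generate S).NeBot := by
    rw [Filter.generate_neBot_iff]
    intro t hts htfin
    set t1 : Set (Set l.ord.ToType) := t ∩ {s | #(↥sᶜ) < l} with ht1
    set t2 : Set (Set l.ord.ToType) := t \ t1 with ht2
    have ht2r : t2 ⊆ Set.range A := by
      intro s hs
      rcases hts hs.1 with h1 | h2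
      · exact h1
      · exact absurd ⟨hs.1, h2⟩ hs.2
    have ht2fin : t2.Finite := htfin.subset diff_subset
    haveI := ht2fin.to_subtype
    choose c hc using fun s : t2 => ht2r s.2
    have hFfin : (Set.range c).Finite := Set.finite_range c
    let F : Finset ι := hFfin.toFinset
    have key : l ≤ #(⋂ β ∈ F, A β) := hcon F
    have hsub : (⋂ β ∈ F, A β) ⊆ ⋂₀ t2 := by
      intro x hx s hs
      rw [Set.mem_iInter₂] at hx
      have := hx (c ⟨s, hs⟩) (hFfin.mem_toFinset.2 (Set.mem_range_self _))
      rwa [hc ⟨s, hs⟩] at this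
    -- the union of complements of members of t1 is small
    have ht1fin : t1.Finite := htfin.subset inter_subset_left
    have hU : #(⋃ s ∈ t1, sᶜ) < l := by
      refine (card_biUnion_lt_iff_forall_of_isRegular hl
        (ht1fin.lt_aleph0.trans_le hl.aleph0_le)).2 ?_
      intro s hs
      exact hs.2
    -- pick a point in the big intersection outside the small union
    have hne : ((⋂ β ∈ F, A β) \ ⋃ s ∈ t1, sᶜ).Nonempty := by
      rw [Set.sdiff_nonempty]
      intro hle
      exact absurd (key.trans (mk_le_mk_of_subset hle)) hU.not_ge
    obtain ⟨x, hx1, hx2⟩ := hne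
    refine ⟨x, ?_⟩
    rw [Set.mem_sInter]
    intro s hs
    by_cases h1 : s ∈ t1
    · by_contra hxs
      exact hx2 (Set.mem_biUnion h1 hxs)
    · exact hsub hx1 s ⟨hs, h1⟩
  -- extend to an ultrafilter
  let D : Ultrafilter l.ord.ToType := Ultrafilter.of (Filter.generate S)
  have hDS : ∀ s ∈ S, s ∈ D := fun s hs =>
    Ultrafilter.of_le (Filter.generate S) (Filter.GenerateSets.basic hs)
  have hDuni : IsUniformUltrafilter l D := by
    intro s hsD
    refine le_antisymm ((mk_le_mk_of_subset (subset_univ s)).trans ?_) (not_lt.1 fun hlt => ?_)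
    · rw [mk_univ, mk_ord_toType]
    · have : sᶜ ∈ D := hDS sᶜ (Or.inr (by simpa using hlt))
      exact (Ultrafilter.compl_notMem_iff.2 hsD) this
  obtain ⟨β, hβ⟩ := h D hDuni
  have hmem : Set.Iio (g β) ∈ Ultrafilter.map (f β) D :=
    Ultrafilter.mem_map.2 (hDS (A β) (Or.inl ⟨β, rfl⟩))
  have := hβ _ hmem
  exact absurd this (mk_Iio_ord_toType (g β)).ne
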